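/- Let (X, d) be a metric space carrying a Borel measure μ that is Ahlfors regular of dimension δ > 0 with constant C (i.e., C⁻¹ r^δ ≤ μ(B(x,r)) ≤ C r^δ for all x ∈ X and 0 < r ≤ r₀). Then there is a constant c > 0, depending only on C and δ, such that for every closed ball B ⊆ X of radius ρ ≤ r₀ and every 0 < α ≤ 1/2, there exist at least c·α^{−δ} points x₁,…,x_I in B, each at distance at least α·ρ from the boundary sphere of B (i.e., each B(x_i, αρ) ⊆ B), with pairwise distances d(x_i, x_j) ≥ 3αρ for i ≠ j. -/

import Mathlib

open Metric MeasureTheory ENNReal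

/-- In a metric space carrying an Ahlfors regular measure of dimension `δ` with
constant `C` (at scales up to `r₀`), there is `c > 0`, depending only on `C` and `δ`,
such that every closed ball of radius `ρ ≤ r₀` contains at least `c * α ^ (-δ)` points
whose `α ρ`-balls are contained in the big ball and which are `3 α ρ`-separated. -/
theorem stmt_1 (C δ r₀ : ℝ) (hC : 0 < C) (hδ : 0 < δ) (hr₀ : 0 < r₀) :
    ∃ c > (0 : ℝ),
      ∀ (X : Type) [MetricSpace X] [MeasurableSpace X] (μ : Measure X),
        (∀ (x : X) (r : ℝ), 0 < r → r ≤ r₀ →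
          ENNReal.ofReal (C⁻¹ * r ^ δ) ≤ μ (closedBall x r) ∧
            μ (closedBall x r) ≤ ENNReal.ofReal (C * r ^ δ)) →
        ∀ (x₀ : X) (ρ : ℝ), 0 < ρ → ρ ≤ r₀ →
          ∀ α : ℝ, 0 < α → α ≤ 1 / 2 →
            ∃ (I : ℕ) (pts : Fin I → X),
              c * α ^ (-δ) ≤ (I : ℝ) ∧
              (∀ i, closedBall (pts i) (α * ρ) ⊆ closedBall x₀ ρ) ∧
              (∀ i j, i ≠ j → 3 * α * ρ ≤ dist (pts i) (pts j)) := by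
  set c : ℝ := min (C⁻¹ * C⁻¹) 1 * (6 : ℝ) ^ (-δ) with hc_def
  have h6pos : (0 : ℝ) < (6 : ℝ) ^ (-δ) := Real.rpow_pos_of_pos (by norm_num) _
  have hcpos : 0 < c := by
    apply mul_pos _ h6pos
    exact lt_min (mul_pos (inv_pos.mpr hC) (inv_pos.mpr hC)) one_pos
  refine ⟨c, hcpos, ?_⟩
  intro X _ _ μ hμ x₀ ρ hρ hρr α hα hα2
  have hαρ : 0 < α * ρ := mul_pos hα hρ
  have hc6 : c ≤ (6 : ℝ) ^ (-δ) := by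
    have h1 : min (C⁻¹ * C⁻¹) 1 ≤ 1 := min_le_right _ _
    calc c ≤ 1 * (6 : ℝ) ^ (-δ) := by
            exact mul_le_mul_of_nonneg_right h1 h6pos.le
      _ = (6 : ℝ) ^ (-δ) := one_mul _
  by_cases hα6 : 1 / 6 < α
  · -- easy case: a single point suffices
    refine ⟨1, fun _ => x₀, ?_, ?_, ?_⟩
    · have hinv : α⁻¹ ≤ 6 := by
        rw [inv_le_comm₀ hα (by norm_num)]
        linarith
      have h1 : α ^ (-δ) ≤ (6 : ℝ) ^ δ := by
        rw [Real.rpow_neg hα.le, ← Real.inv_rpow hα.le]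
        exact Real.rpow_le_rpow (inv_nonneg.mpr hα.le) hinv hδ.le
      have h2 : c * α ^ (-δ) ≤ (6 : ℝ) ^ (-δ) * (6 : ℝ) ^ δ :=
        mul_le_mul hc6 h1 (Real.rpow_nonneg hα.le _) h6pos.le
      have h3 : (6 : ℝ) ^ (-δ) * (6 : ℝ) ^ δ = 1 := by
        rw [← Real.rpow_add (by norm_num), neg_add_cancel, Real.rpow_zero]
      simpa [h3] using h2
    · intro i z hz
      simp only [mem_closedBall] at hz ⊢
      have : dist z x₀ ≤ α * ρ := hz
      nlinarith
    · intro i j hij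
      exact absurd (Subsingleton.elim i j) hij
  · -- main case: α ≤ 1/6
    push_neg at hα6
    have h3αρ : 0 < 3 * α * ρ := by positivity
    have h3αρ_le : 3 * α * ρ ≤ ρ / 2 := by nlinarith
    have hρ2 : 0 < ρ / 2 := by linarith
    -- Zorn's lemma: a maximal 3αρ-separated subset of the half-ball
    set Sep : Set (Set X) :=
      {s | s ⊆ closedBall x₀ (ρ / 2) ∧ s.Pairwise (fun x y => 3 * α * ρ ≤ dist x y)}
      with hSep_def
    obtain ⟨S, hSmem, hSmax⟩ : ∃ S, Maximal (· ∈ Sep) S := by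
      apply zorn_subset
      intro ch hch hchain
      refine ⟨⋃₀ ch, ⟨?_, ?_⟩, fun s hs => Set.subset_sUnion_of_mem hs⟩
      · exact Set.sUnion_subset fun s hs => (hch hs).1
      · intro x hx y hy hxy
        obtain ⟨s, hs, hxs⟩ := hx
        obtain ⟨t, ht, hyt⟩ := hy
        by_cases hst : s = t
        · exact (hch ht).2 (hst ▸ hxs) hyt hxy
        · rcases hchain hs ht hst with h | h
          · exact (hch ht).2 (h hxs) hyt hxy
          · exact (hch hs).2 hxs (h hyt) hxy
    obtain ⟨hSsub, hSpair⟩ := hSmem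
    -- maximality: every point of the half-ball is within 3αρ of S
    have hcover : ∀ y ∈ closedBall x₀ (ρ / 2), ∃ x ∈ S, dist y x < 3 * α * ρ := by
      intro y hy
      by_contra hcon
      push_neg at hcon
      have hynot : y ∉ S := fun hyS => by
        have := hcon y hyS
        simp only [dist_self] at this
        linarith
      have hins : insert y S ∈ Sep := by
        constructor
        · exact Set.insert_subset hy hSsub
        · haveI : Std.Symm (fun x y : X => 3 * α * ρ ≤ dist x y) := ⟨fun a b h => by rwa [dist_comm]⟩
          rw [Set.pairwise_insert_of_symm]
          exact ⟨hSpair, fun b hb _ => hcon b hb⟩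
      have := hSmax hins (Set.subset_insert y S)
      exact hynot (this (Set.mem_insert y S))
    -- it suffices to find a finset T ⊆ S with large cardinality
    suffices h : ∃ T : Finset X, ↑T ⊆ S ∧ c * α ^ (-δ) ≤ (T.card : ℝ) by
      obtain ⟨T, hTS, hTcard⟩ := h
      refine ⟨T.card, fun i => (T.equivFin.symm i : X), hTcard, ?_, ?_⟩
      · intro i z hz
        have hmem : ((T.equivFin.symm i : X)) ∈ closedBall x₀ (ρ / 2) :=
          hSsub (hTS (T.equivFin.symm i).2)
        simp only [mem_closedBall] at hz hmem ⊢
        calc dist z x₀ ≤ dist z (T.equivFin.symm i : X) + dist (T.equivFin.symm i : X) x₀ :=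
              dist_triangle _ _ _
          _ ≤ α * ρ + ρ / 2 := add_le_add hz hmem
          _ ≤ ρ := by nlinarith
      · intro i j hij
        have hne : (T.equivFin.symm i : X) ≠ (T.equivFin.symm j : X) := by
          intro h
          exact hij (T.equivFin.symm.injective (Subtype.ext h))
        exact hSpair (hTS (T.equivFin.symm i).2) (hTS (T.equivFin.symm j).2) hne
    by_cases hfin : S.Finite
    · -- finite case: measure counting
      set T := hfin.toFinset with hT_def
      refine ⟨T, by simp [hT_def], ?_⟩
      have hcov2 : closedBall x₀ (ρ / 2) ⊆ ⋃ x ∈ T, closedBall x (3 * α * ρ) := by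
        intro y hy
        obtain ⟨x, hxS, hxd⟩ := hcover y hy
        simp only [Set.mem_iUnion]
        exact ⟨x, hfin.mem_toFinset.mpr hxS, mem_closedBall.mpr hxd.le⟩
      have hlow : ENNReal.ofReal (C⁻¹ * (ρ / 2) ^ δ) ≤ μ (closedBall x₀ (ρ / 2)) :=
        (hμ x₀ (ρ / 2) hρ2 (by linarith)).1
      have hup : ∀ x ∈ T, μ (closedBall x (3 * α * ρ)) ≤ ENNReal.ofReal (C * (3 * α * ρ) ^ δ) :=
        fun x _ => (hμ x (3 * α * ρ) h3αρ (by linarith)).2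
      have hchain : ENNReal.ofReal (C⁻¹ * (ρ / 2) ^ δ) ≤
          (T.card : ℝ≥0∞) * ENNReal.ofReal (C * (3 * α * ρ) ^ δ) := by
        calc ENNReal.ofReal (C⁻¹ * (ρ / 2) ^ δ) ≤ μ (closedBall x₀ (ρ / 2)) := hlow
          _ ≤ μ (⋃ x ∈ T, closedBall x (3 * α * ρ)) := measure_mono hcov2
          _ ≤ ∑ x ∈ T, μ (closedBall x (3 * α * ρ)) :=
              MeasureTheory.measure_biUnion_finset_le _ _
          _ ≤ T.card • ENNReal.ofReal (C * (3 * α * ρ) ^ δ) :=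
              Finset.sum_le_card_nsmul _ _ _ hup
          _ = (T.card : ℝ≥0∞) * ENNReal.ofReal (C * (3 * α * ρ) ^ δ) := by
              rw [nsmul_eq_mul]
      have hreal : C⁻¹ * (ρ / 2) ^ δ ≤ (T.card : ℝ) * (C * (3 * α * ρ) ^ δ) := by
        rw [← ENNReal.ofReal_natCast T.card, ← ENNReal.ofReal_mul (Nat.cast_nonneg _)] at hchain
        exact (ENNReal.ofReal_le_ofReal_iff (by positivity)).mp hchain
      -- now pure real algebra
      have hfact : (3 * α * ρ) ^ δ = (6 * α) ^ δ * (ρ / 2) ^ δ := by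
        rw [← Real.mul_rpow (by positivity) (by positivity)]
        ring_nf
      have hP : (0 : ℝ) < (ρ / 2) ^ δ := Real.rpow_pos_of_pos hρ2 _
      have hA : (0 : ℝ) < (6 * α) ^ δ := Real.rpow_pos_of_pos (by linarith) _
      have h1 : C⁻¹ ≤ (T.card : ℝ) * (C * (6 * α) ^ δ) := by
        rw [hfact] at hreal
        have := (mul_le_mul_iff_of_pos_right hP).mp (by linarith [hreal] : C⁻¹ * (ρ / 2) ^ δ ≤
          ((T.card : ℝ) * (C * (6 * α) ^ δ)) * (ρ / 2) ^ δ)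
        exact this
      have h2 : C⁻¹ * C⁻¹ * ((6 * α) ^ δ)⁻¹ ≤ (T.card : ℝ) := by
        have heq : C⁻¹ * C⁻¹ * ((6 * α) ^ δ)⁻¹ = C⁻¹ / (C * (6 * α) ^ δ) := by
          field_simp
        rw [heq, div_le_iff₀ (by positivity)]
        exact h1
      have hAinv : ((6 * α) ^ δ)⁻¹ = (6 : ℝ) ^ (-δ) * α ^ (-δ) := by
        rw [← Real.rpow_neg (by linarith), Real.mul_rpow (by norm_num) hα.le]
      calc c * α ^ (-δ) = min (C⁻¹ * C⁻¹) 1 * ((6 : ℝ) ^ (-δ) * α ^ (-δ)) := by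
            rw [hc_def]; ring
        _ ≤ C⁻¹ * C⁻¹ * ((6 : ℝ) ^ (-δ) * α ^ (-δ)) := by
            apply mul_le_mul_of_nonneg_right (min_le_left _ _)
            positivity
        _ = C⁻¹ * C⁻¹ * ((6 * α) ^ δ)⁻¹ := by rw [hAinv]
        _ ≤ (T.card : ℝ) := h2
    · -- infinite case: just pick enough points
      obtain ⟨T, hTS, hTcard⟩ :=
        Set.Infinite.exists_subset_card_eq hfin ⌈c * α ^ (-δ)⌉₊
      refine ⟨T, hTS, ?_⟩
      rw [hTcard]
      exact Nat.le_ceil _
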